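/- Fix positive constants β, λ, r. Define ψ(τ) := β²τ − λ²·ω(rτ)·τ², where ω(s) = (e^{s} − s − 1)/s². Then ψ is concave on [0, ∞), attains its maximum at τ* = (1/r)·ln(1 + rβ²/λ²), and the maximum value is ψ(τ*) = (β²/r)·[(1 + λ²/(rβ²))·ln(1 + β²r/λ²) − 1]. Moreover, τ* ≤ 1 if and only if β²·r ≤ (e^{r} − 1)·λ². -/

import Mathlib

/-- Properties of the per-iteration descent function
`ψ(τ) = β²τ - λ²·ω(rτ)·τ² = β²τ - λ²(e^{rτ} - rτ - 1)/r²`: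
it is concave on `[0, ∞)`, maximized at `τ* = (1/r)ln(1 + rβ²/λ²)` with the stated
maximum value, and `τ* ≤ 1 ↔ β²r ≤ (e^r - 1)λ²`. -/
theorem descent_function_properties (β lam r : ℝ) (hβ : 0 < β) (hlam : 0 < lam)
    (hr : 0 < r) :
    ConcaveOn ℝ (Set.Ici (0 : ℝ))
        (fun τ : ℝ => β ^ 2 * τ - lam ^ 2 * (Real.exp (r * τ) - r * τ - 1) / r ^ 2) ∧
      IsMaxOn
        (fun τ : ℝ => β ^ 2 * τ - lam ^ 2 * (Real.exp (r * τ) - r * τ - 1) / r ^ 2)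
        (Set.Ici (0 : ℝ)) ((1 / r) * Real.log (1 + r * β ^ 2 / lam ^ 2)) ∧
      (fun τ : ℝ => β ^ 2 * τ - lam ^ 2 * (Real.exp (r * τ) - r * τ - 1) / r ^ 2)
          ((1 / r) * Real.log (1 + r * β ^ 2 / lam ^ 2)) =
        (β ^ 2 / r) *
          ((1 + lam ^ 2 / (r * β ^ 2)) * Real.log (1 + β ^ 2 * r / lam ^ 2) - 1) ∧
      ((1 / r) * Real.log (1 + r * β ^ 2 / lam ^ 2) ≤ 1 ↔
        β ^ 2 * r ≤ (Real.exp r - 1) * lam ^ 2) := by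
  have hr' : r ≠ 0 := ne_of_gt hr
  have hlam2 : (0:ℝ) < lam ^ 2 := by positivity
  have hA : (0:ℝ) < 1 + r * β ^ 2 / lam ^ 2 := by positivity
  set t : ℝ := (1 / r) * Real.log (1 + r * β ^ 2 / lam ^ 2) with ht
  have hL : Real.log (1 + r * β ^ 2 / lam ^ 2) = r * t := by
    rw [ht]; field_simp
  have hexp_t : Real.exp (r * t) = 1 + r * β ^ 2 / lam ^ 2 := by
    rw [← hL, Real.exp_log hA]
  refine ⟨?_, ?_, ?_, ?_⟩
  · -- concavity
    have haff : ConcaveOn ℝ (Set.Ici (0:ℝ))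
        (fun τ : ℝ => (β ^ 2 + lam ^ 2 / r) * τ + lam ^ 2 / r ^ 2) := by
      rcases ((β ^ 2 + lam ^ 2 / r) • (LinearMap.id : ℝ →ₗ[ℝ] ℝ)).concaveOn
          (convex_Ici (0:ℝ)) with ⟨hconv, hle⟩
      refine ⟨hconv, fun x hx y hy a b ha hb hab => ?_⟩
      have := hle hx hy ha hb hab
      simp only [LinearMap.smul_apply, LinearMap.id_apply, smul_eq_mul] at this ⊢
      have hk : a * (lam ^ 2 / r ^ 2) + b * (lam ^ 2 / r ^ 2) = lam ^ 2 / r ^ 2 := by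
        rw [← add_mul, hab, one_mul]
      linarith [this, hk]
    have hexp : ConvexOn ℝ (Set.Ici (0:ℝ))
        (fun τ : ℝ => lam ^ 2 / r ^ 2 * Real.exp (r * τ)) := by
      have h1 : ConvexOn ℝ Set.univ (fun τ : ℝ => Real.exp (r * τ)) := by
        have := convexOn_exp.comp_affineMap (r • (AffineMap.id ℝ ℝ))
        simpa [Function.comp_def, Pi.smul_apply, smul_eq_mul] using this
      have h2 := (h1.subset (Set.subset_univ _) (convex_Ici 0)).smul
        (c := lam ^ 2 / r ^ 2) (by positivity)
      simpa [smul_eq_mul] using h2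
    have := haff.sub hexp
    convert this using 1
    case e'_10 => rfl
    case e'_7 => rfl
    ext τ
    simp only [Pi.sub_apply]
    field_simp
    ring
  · -- max
    intro τ _
    simp only [Set.mem_setOf_eq]
    have key : Real.exp (r * t) * (r * τ - r * t + 1) ≤ Real.exp (r * τ) := by
      have := Real.add_one_le_exp (r * τ - r * t)
      calc Real.exp (r * t) * (r * τ - r * t + 1)
          ≤ Real.exp (r * t) * Real.exp (r * τ - r * t) := by
            apply mul_le_mul_of_nonneg_left this (Real.exp_pos _).le
        _ = Real.exp (r * τ) := by rw [← Real.exp_add]; ring_nf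
    rw [hexp_t] at key
    have key2 := mul_le_mul_of_nonneg_left key hlam2.le
    rw [hexp_t, ← sub_nonneg]
    have hrep : β ^ 2 * t - lam ^ 2 * (1 + r * β ^ 2 / lam ^ 2 - r * t - 1) / r ^ 2 -
        (β ^ 2 * τ - lam ^ 2 * (Real.exp (r * τ) - r * τ - 1) / r ^ 2) =
        (lam ^ 2 * Real.exp (r * τ) -
          lam ^ 2 * ((1 + r * β ^ 2 / lam ^ 2) * (r * τ - r * t + 1))) / r ^ 2 := by
      field_simp
      ring
    rw [hrep]
    apply div_nonneg _ (by positivity)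
    linarith [key2]
  · -- value
    simp only
    have hL' : Real.log (1 + β ^ 2 * r / lam ^ 2) = r * t := by
      rw [← hL]; ring_nf
    rw [hexp_t, hL', ht, hL]
    field_simp
    ring
  · -- iff
    rw [ht]
    rw [div_mul_eq_mul_div, one_mul, div_le_one hr]
    rw [Real.log_le_iff_le_exp hA]
    constructor
    · intro h
      have : r * β ^ 2 / lam ^ 2 ≤ Real.exp r - 1 := by linarith
      rw [div_le_iff₀ hlam2] at this
      linarith [this]
    · intro h
      have : r * β ^ 2 / lam ^ 2 ≤ Real.exp r - 1 := by
        rw [div_le_iff₀ hlam2]; linarith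
      linarith
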